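/- For every Hermitian Dirac operator D with zero diagonal on n vertices and every pair of vertices i, j, the noncommutative distance is bounded above by the geodesic distance: d^D(i,j) ≤ ℓ^D(i,j) (as elements of [0,∞]). -/

import Mathlib

open scoped ENNReal

/-- The operator norm on square matrices induced by the Euclidean (ℓ²) norm. -/
noncomputable def opNorm {ι : Type*} [Finite ι] (M : Matrix ι ι ℂ) : ℝ :=
  letI := Fintype.ofFinite ι
  letI := Classical.decEq ι
  ‖Matrix.toEuclideanCLM (𝕜 := ℂ) M‖

/-- The commutator `[D, π(a)]` of a matrix with the diagonal matrix of `a`. -/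
noncomputable def commD {ι : Type*} [Finite ι] (D : Matrix ι ι ℂ) (a : ι → ℂ) : Matrix ι ι ℂ :=
  letI := Fintype.ofFinite ι
  letI := Classical.decEq ι
  D * Matrix.diagonal a - Matrix.diagonal a * D

/-- Connes' noncommutative distance associated to the Dirac operator `D`. -/
noncomputable def ncDist {ι : Type*} [Finite ι] (D : Matrix ι ι ℂ) (i j : ι) : ℝ≥0∞ :=
  ⨆ (a : ι → ℂ) (_ : opNorm (commD D a) ≤ 1), ENNReal.ofReal ‖a i - a j‖

/-- The weight of an edge: the inverse of `|D i j|` (infinite if `D i j = 0`). -/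
noncomputable def eWeight {ι : Type*} (D : Matrix ι ι ℂ) (u v : ι) : ℝ≥0∞ :=
  (ENNReal.ofReal ‖D u v‖)⁻¹

/-- Adjacency in the graph `G_D`. -/
def Adjac {ι : Type*} (D : Matrix ι ι ℂ) (u v : ι) : Prop := u ≠ v ∧ D u v ≠ 0

/-- The length of a walk `i :: p` computed with weights `eWeight D`. -/
noncomputable def walkLength {ι : Type*} (D : Matrix ι ι ℂ) : ι → List ι → ℝ≥0∞
  | _, [] => 0
  | u, v :: rest => eWeight D u v + walkLength D v rest

/-- `i :: p` is a walk from `i` to `j` in the graph `G_D`. -/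
def IsWalk {ι : Type*} (D : Matrix ι ι ℂ) (i j : ι) (p : List ι) : Prop :=
  List.Chain (Adjac D) i p ∧ (i :: p).getLast (List.cons_ne_nil _ _) = j

/-- `i` and `j` lie in the same connected component of `G_D`. -/
def Conn {ι : Type*} (D : Matrix ι ι ℂ) (i j : ι) : Prop := ∃ p, IsWalk D i j p

/-- The geodesic (weighted shortest-path) distance on `G_D`. -/
noncomputable def gDist {ι : Type*} (D : Matrix ι ι ℂ) (i j : ι) : ℝ≥0∞ :=
  ⨅ (p : List ι) (_ : IsWalk D i j p), walkLength D i p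

set_option maxHeartbeats 1000000 in
lemma entry_le_clmNorm {ι : Type*} [Fintype ι] [DecidableEq ι]
    (M : Matrix ι ι ℂ) (u v : ι) :
    ‖M u v‖ ≤ ‖Matrix.toEuclideanCLM (𝕜 := ℂ) M‖ := by
  have key : Matrix.toEuclideanCLM (𝕜 := ℂ) M (EuclideanSpace.single v (1:ℂ))
      = (WithLp.equiv 2 _).symm (Matrix.toLin' M (Pi.single v 1)) := by
    rfl
  have h : M u v = inner ℂ (EuclideanSpace.single u (1:ℂ))
      (Matrix.toEuclideanCLM (𝕜 := ℂ) M (EuclideanSpace.single v (1:ℂ))) := by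
    rw [EuclideanSpace.inner_single_left, key]
    simp [Matrix.toLin'_apply, Matrix.mulVec_single, PiLp.toLp_apply]
  rw [h]
  have h1 := norm_inner_le_norm (𝕜 := ℂ) (EuclideanSpace.single u (1:ℂ))
      (Matrix.toEuclideanCLM (𝕜 := ℂ) M (EuclideanSpace.single v (1:ℂ)))
  have h2 := (Matrix.toEuclideanCLM (𝕜 := ℂ) M).le_opNorm (EuclideanSpace.single v (1:ℂ))
  simp only [EuclideanSpace.norm_single, norm_one, one_mul, mul_one] at h1 h2
  exact h1.trans h2

lemma entry_le_opNorm {ι : Type*} [Finite ι] (M : Matrix ι ι ℂ) (u v : ι) :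
    ‖M u v‖ ≤ opNorm M := by
  unfold opNorm
  letI := Fintype.ofFinite ι
  letI := Classical.decEq ι
  exact entry_le_clmNorm M u v

lemma commD_apply {ι : Type*} [Finite ι] (D : Matrix ι ι ℂ) (a : ι → ℂ) (u v : ι) :
    commD D a u v = D u v * (a v - a u) := by
  unfold commD
  letI := Fintype.ofFinite ι
  letI := Classical.decEq ι
  simp [Matrix.sub_apply, Matrix.mul_diagonal, Matrix.diagonal_mul]
  ring

lemma edge_bound {ι : Type*} [Finite ι] (D : Matrix ι ι ℂ) (a : ι → ℂ)
    (ha : opNorm (commD D a) ≤ 1) (u v : ι) :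
    ENNReal.ofReal ‖a u - a v‖ ≤ eWeight D u v := by
  have h1 : ‖D u v‖ * ‖a v - a u‖ ≤ 1 := by
    have h := (entry_le_opNorm (commD D a) u v).trans ha
    rwa [commD_apply, norm_mul] at h
  rw [eWeight, ENNReal.le_inv_iff_mul_le, ← ENNReal.ofReal_mul (norm_nonneg _)]
  calc ENNReal.ofReal (‖a u - a v‖ * ‖D u v‖) ≤ ENNReal.ofReal 1 := by
        apply ENNReal.ofReal_le_ofReal
        rw [norm_sub_rev]; linarith [mul_comm ‖D u v‖ ‖a v - a u‖ ▸ h1]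
    _ = 1 := ENNReal.ofReal_one

lemma walk_bound {ι : Type*} [Finite ι] (D : Matrix ι ι ℂ) (a : ι → ℂ)
    (ha : opNorm (commD D a) ≤ 1) :
    ∀ (p : List ι) (u : ι), List.Chain (Adjac D) u p →
      ENNReal.ofReal ‖a u - a ((u :: p).getLast (List.cons_ne_nil _ _))‖ ≤ walkLength D u p := by
  intro p
  induction p with
  | nil => intro u _; simp [walkLength]
  | cons v rest ih =>
    intro u hchain
    unfold List.Chain at hchain; rw [List.chain_cons] at hchain
    have hlast : (u :: v :: rest).getLast (List.cons_ne_nil _ _)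
        = (v :: rest).getLast (List.cons_ne_nil _ _) := by
      simp [List.getLast]
    rw [hlast]
    set w := (v :: rest).getLast (List.cons_ne_nil _ _) with hw
    calc ENNReal.ofReal ‖a u - a w‖
        ≤ ENNReal.ofReal (‖a u - a v‖ + ‖a v - a w‖) := by
          apply ENNReal.ofReal_le_ofReal
          calc ‖a u - a w‖ = ‖(a u - a v) + (a v - a w)‖ := by ring_nf
            _ ≤ ‖a u - a v‖ + ‖a v - a w‖ := norm_add_le _ _
      _ ≤ ENNReal.ofReal ‖a u - a v‖ + ENNReal.ofReal ‖a v - a w‖ := ENNReal.ofReal_add_le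
      _ ≤ eWeight D u v + walkLength D v rest := by
          gcongr
          · exact edge_bound D a ha u v
          · exact ih v hchain.2
      _ = walkLength D u (v :: rest) := rfl

theorem stmt0 {n : ℕ} (D : Matrix (Fin n) (Fin n) ℂ)
    (hherm : D.IsHermitian) (hdiag : ∀ i, D i i = 0) (i j : Fin n) :
    ncDist D i j ≤ gDist D i j := by
  rw [ncDist, gDist]
  refine iSup₂_le fun a ha => le_iInf₂ fun p hp => ?_
  obtain ⟨hchain, hlast⟩ := hp
  have := walk_bound D a ha p i hchain
  rwa [hlast] at this
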